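/- arXiv:math-ph/0008003 — 2 statements merged into one kernel-verified Lean document; each statement's English description precedes it below -/
import Mathlib

section
/- Two rings R and S are isomorphic objects in the bicategory of rings and bimodules — i.e., there exist an (R,S)-bimodule M and an (S,R)-bimodule N together with an (R,R)-bimodule isomorphism M ⊗[S] N ≅ R and an (S,S)-bimodule isomorphism N ⊗[R] M ≅ S — if and only if there is an additive equivalence between the category of left R-modules and the category of left S-modules. -/
open scoped TensorProduct
open MulOpposite

namespace Paper

noncomputable section

/-- The subgroup of relators defining the balanced tensor product `M ⊗[S] N`
of a right `S`-module `M` and a left `S`-module `N`. -/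
def balRel (S : Type*) [Ring S] (M : Type*) [AddCommGroup M] [Module Sᵐᵒᵖ M]
    (N : Type*) [AddCommGroup N] [Module S N] : AddSubgroup (M ⊗[ℤ] N) :=
  AddSubgroup.closure
    {x | ∃ (m : M) (s : S) (n : N), x = (op s • m) ⊗ₜ[ℤ] n - m ⊗ₜ[ℤ] (s • n)}

/-- The balanced tensor product `M ⊗[S] N` of a right `S`-module `M` and a
left `S`-module `N`: the quotient of the tensor product `M ⊗[ℤ] N` of abelian
groups by the relations `(m • s) ⊗ n = m ⊗ (s • n)`. -/
def BalTensor (S : Type*) [Ring S] (M : Type*) [AddCommGroup M] [Module Sᵐᵒᵖ M]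
    (N : Type*) [AddCommGroup N] [Module S N] : Type _ :=
  (M ⊗[ℤ] N) ⧸ balRel S M N

instance (S : Type*) [Ring S] (M : Type*) [AddCommGroup M] [Module Sᵐᵒᵖ M]
    (N : Type*) [AddCommGroup N] [Module S N] : AddCommGroup (BalTensor S M N) :=
  QuotientAddGroup.Quotient.addCommGroup _

/-- The elementary tensor `m ⊗ n` in the balanced tensor product `M ⊗[S] N`. -/
def BalTensor.tmul (S : Type*) [Ring S] (M : Type*) [AddCommGroup M] [Module Sᵐᵒᵖ M]
    (N : Type*) [AddCommGroup N] [Module S N] (m : M) (n : N) : BalTensor S M N :=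
  QuotientAddGroup.mk (m ⊗ₜ[ℤ] n)


/-- The canonical projection onto the balanced tensor product. -/
def BalTensor.mk (S : Type*) [Ring S] (M : Type*) [AddCommGroup M] [Module Sᵐᵒᵖ M]
    (N : Type*) [AddCommGroup N] [Module S N] (x : M ⊗[ℤ] N) : BalTensor S M N :=
  QuotientAddGroup.mk x

/-- The left action of `r : R` on `M ⊗[ℤ] N` through the first factor. -/
def lsmulAux (R : Type*) [Ring R] (M : Type*) [AddCommGroup M] [Module R M]
    (N : Type*) [AddCommGroup N] (r : R) : M ⊗[ℤ] N →+ M ⊗[ℤ] N :=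
  (LinearMap.rTensor N ((DistribMulAction.toAddMonoidHom M r).toIntLinearMap)).toAddMonoidHom

/-- The right action of `t : Tᵐᵒᵖ` on `M ⊗[ℤ] N` through the second factor. -/
def rsmulAux (T : Type*) [Ring T] (M : Type*) [AddCommGroup M]
    (N : Type*) [AddCommGroup N] [Module Tᵐᵒᵖ N] (t : Tᵐᵒᵖ) : M ⊗[ℤ] N →+ M ⊗[ℤ] N :=
  (LinearMap.lTensor M ((DistribMulAction.toAddMonoidHom N t).toIntLinearMap)).toAddMonoidHom

section LeftAction

variable (R S : Type*) [Ring R] [Ring S]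
  (M : Type*) [AddCommGroup M] [Module R M] [Module Sᵐᵒᵖ M] [SMulCommClass R Sᵐᵒᵖ M]
  (N : Type*) [AddCommGroup N] [Module S N]

theorem lsmulAux_le (r : R) :
    balRel S M N ≤ (balRel S M N).comap (lsmulAux R M N r) := by
  rw [balRel, AddSubgroup.closure_le]
  rintro x ⟨m, s, n, rfl⟩
  simp only [SetLike.mem_coe, AddSubgroup.mem_comap, map_sub]
  have h1 : lsmulAux R M N r ((op s • m) ⊗ₜ[ℤ] n) = (op s • (r • m)) ⊗ₜ[ℤ] n := by
    simp [lsmulAux, LinearMap.rTensor_tmul, smul_comm]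
  have h2 : lsmulAux R M N r (m ⊗ₜ[ℤ] (s • n)) = (r • m) ⊗ₜ[ℤ] (s • n) := by
    simp [lsmulAux, LinearMap.rTensor_tmul]
  rw [h1, h2]
  exact AddSubgroup.subset_closure ⟨r • m, s, n, rfl⟩

instance : SMul R (BalTensor S M N) :=
  ⟨fun r => QuotientAddGroup.map _ _ (lsmulAux R M N r) (lsmulAux_le R S M N r)⟩

theorem BalTensor.lsmul_mk (r : R) (x : M ⊗[ℤ] N) :
    r • (BalTensor.mk S M N x) = BalTensor.mk S M N (lsmulAux R M N r x) := rfl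

instance : Module R (BalTensor S M N) where
  smul r x := r • x
  one_smul x := by
    induction x using QuotientAddGroup.induction_on with
    | H y =>
      show QuotientAddGroup.mk (lsmulAux R M N 1 y) = _
      congr 1
      induction y using TensorProduct.induction_on with
      | zero => simp
      | tmul m n => simp [lsmulAux]
      | add a b ha hb => simp only [map_add, ha, hb]
  mul_smul a b x := by
    induction x using QuotientAddGroup.induction_on with
    | H y =>
      show QuotientAddGroup.mk (lsmulAux R M N (a * b) y) =
        QuotientAddGroup.mk (lsmulAux R M N a (lsmulAux R M N b y))
      congr 1
      induction y using TensorProduct.induction_on with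
      | zero => simp
      | tmul m n => simp [lsmulAux, mul_smul]
      | add a' b' ha hb => simp only [map_add, ha, hb]
  smul_zero r := map_zero (QuotientAddGroup.map _ _ (lsmulAux R M N r) (lsmulAux_le R S M N r))
  smul_add r x y := map_add (QuotientAddGroup.map _ _ (lsmulAux R M N r) (lsmulAux_le R S M N r)) x y
  add_smul a b x := by
    induction x using QuotientAddGroup.induction_on with
    | H y =>
      show QuotientAddGroup.mk (lsmulAux R M N (a + b) y) =
        QuotientAddGroup.mk (lsmulAux R M N a y) + QuotientAddGroup.mk (lsmulAux R M N b y)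
      show _ = QuotientAddGroup.mk (lsmulAux R M N a y + lsmulAux R M N b y)
      congr 1
      induction y using TensorProduct.induction_on with
      | zero => simp
      | tmul m n => simp [lsmulAux, add_smul, TensorProduct.add_tmul]
      | add a' b' ha hb =>
        simp only [map_add, ha, hb]
        abel
  zero_smul x := by
    induction x using QuotientAddGroup.induction_on with
    | H y =>
      show QuotientAddGroup.mk (lsmulAux R M N (0 : R) y) = 0
      have : lsmulAux R M N (0 : R) y = 0 := by
        induction y using TensorProduct.induction_on with
        | zero => simp
        | tmul m n => simp [lsmulAux]
        | add a' b' ha hb => simp only [map_add, ha, hb]; abel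
      rw [this]
      rfl

theorem BalTensor.smul_tmul (r : R) (m : M) (n : N) :
    r • (BalTensor.tmul S M N m n) = BalTensor.tmul S M N (r • m) n := by
  show QuotientAddGroup.mk (lsmulAux R M N r (m ⊗ₜ[ℤ] n)) = _
  rw [BalTensor.tmul]
  congr 1

end LeftAction

section RightAction

variable (S T : Type*) [Ring S] [Ring T]
  (M : Type*) [AddCommGroup M] [Module Sᵐᵒᵖ M]
  (N : Type*) [AddCommGroup N] [Module S N] [Module Tᵐᵒᵖ N] [SMulCommClass S Tᵐᵒᵖ N]

theorem rsmulAux_le (t : Tᵐᵒᵖ) :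
    balRel S M N ≤ (balRel S M N).comap (rsmulAux T M N t) := by
  rw [balRel, AddSubgroup.closure_le]
  rintro x ⟨m, s, n, rfl⟩
  simp only [SetLike.mem_coe, AddSubgroup.mem_comap, map_sub]
  have h1 : rsmulAux T M N t ((op s • m) ⊗ₜ[ℤ] n) = (op s • m) ⊗ₜ[ℤ] (t • n) := by
    simp [rsmulAux, LinearMap.lTensor_tmul]
  have h2 : rsmulAux T M N t (m ⊗ₜ[ℤ] (s • n)) = m ⊗ₜ[ℤ] (s • (t • n)) := by
    simp [rsmulAux, LinearMap.lTensor_tmul, smul_comm]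
  rw [h1, h2]
  exact AddSubgroup.subset_closure ⟨m, s, t • n, rfl⟩

instance : SMul Tᵐᵒᵖ (BalTensor S M N) :=
  ⟨fun t => QuotientAddGroup.map _ _ (rsmulAux T M N t) (rsmulAux_le S T M N t)⟩

theorem BalTensor.rsmul_mk (t : Tᵐᵒᵖ) (x : M ⊗[ℤ] N) :
    t • (BalTensor.mk S M N x) = BalTensor.mk S M N (rsmulAux T M N t x) := rfl

instance : Module Tᵐᵒᵖ (BalTensor S M N) where
  smul t x := t • x
  one_smul x := by
    induction x using QuotientAddGroup.induction_on with
    | H y =>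
      show QuotientAddGroup.mk (rsmulAux T M N 1 y) = _
      congr 1
      induction y using TensorProduct.induction_on with
      | zero => simp
      | tmul m n => simp [rsmulAux]
      | add a b ha hb => simp only [map_add, ha, hb]
  mul_smul a b x := by
    induction x using QuotientAddGroup.induction_on with
    | H y =>
      show QuotientAddGroup.mk (rsmulAux T M N (a * b) y) =
        QuotientAddGroup.mk (rsmulAux T M N a (rsmulAux T M N b y))
      congr 1
      induction y using TensorProduct.induction_on with
      | zero => simp
      | tmul m n => simp [rsmulAux, mul_smul]
      | add a' b' ha hb => simp only [map_add, ha, hb]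
  smul_zero t := map_zero (QuotientAddGroup.map _ _ (rsmulAux T M N t) (rsmulAux_le S T M N t))
  smul_add t x y := map_add (QuotientAddGroup.map _ _ (rsmulAux T M N t) (rsmulAux_le S T M N t)) x y
  add_smul a b x := by
    induction x using QuotientAddGroup.induction_on with
    | H y =>
      show QuotientAddGroup.mk (rsmulAux T M N (a + b) y) =
        QuotientAddGroup.mk (rsmulAux T M N a y) + QuotientAddGroup.mk (rsmulAux T M N b y)
      show _ = QuotientAddGroup.mk (rsmulAux T M N a y + rsmulAux T M N b y)
      congr 1
      induction y using TensorProduct.induction_on with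
      | zero => simp
      | tmul m n => simp [rsmulAux, add_smul, TensorProduct.tmul_add]
      | add a' b' ha hb =>
        simp only [map_add, ha, hb]
        abel
  zero_smul x := by
    induction x using QuotientAddGroup.induction_on with
    | H y =>
      show QuotientAddGroup.mk (rsmulAux T M N (0 : Tᵐᵒᵖ) y) = 0
      have : rsmulAux T M N (0 : Tᵐᵒᵖ) y = 0 := by
        induction y using TensorProduct.induction_on with
        | zero => simp
        | tmul m n => simp [rsmulAux]
        | add a' b' ha hb => simp only [map_add, ha, hb]; abel
      rw [this]
      rfl

theorem BalTensor.tmul_smul (t : Tᵐᵒᵖ) (m : M) (n : N) :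
    t • (BalTensor.tmul S M N m n) = BalTensor.tmul S M N m (t • n) := by
  show QuotientAddGroup.mk (rsmulAux T M N t (m ⊗ₜ[ℤ] n)) = _
  rw [BalTensor.tmul]
  congr 1

end RightAction

section Bimodule

variable (R S T : Type*) [Ring R] [Ring S] [Ring T]
  (M : Type*) [AddCommGroup M] [Module R M] [Module Sᵐᵒᵖ M] [SMulCommClass R Sᵐᵒᵖ M]
  (N : Type*) [AddCommGroup N] [Module S N] [Module Tᵐᵒᵖ N] [SMulCommClass S Tᵐᵒᵖ N]

instance : SMulCommClass R Tᵐᵒᵖ (BalTensor S M N) where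
  smul_comm r t x := by
    induction x using QuotientAddGroup.induction_on with
    | H y =>
      show QuotientAddGroup.mk (lsmulAux R M N r (rsmulAux T M N t y)) =
        QuotientAddGroup.mk (rsmulAux T M N t (lsmulAux R M N r y))
      congr 1
      induction y using TensorProduct.induction_on with
      | zero => simp
      | tmul m n => simp [rsmulAux, lsmulAux]
      | add a b ha hb => simp only [map_add, ha, hb]

end Bimodule

end

end Paper

open Paper MulOpposite CategoryTheory

universe u

namespace Paper.BalTensor

variable {S : Type*} [Ring S] {M : Type*} [AddCommGroup M] [Module Sᵐᵒᵖ M]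
  {N : Type*} [AddCommGroup N] [Module S N]

theorem ind {P : BalTensor S M N → Prop} (h0 : P 0)
    (ht : ∀ m n, P (tmul S M N m n))
    (ha : ∀ x y, P x → P y → P (x + y)) : ∀ x, P x := by
  intro x
  induction x using QuotientAddGroup.induction_on with
  | H y =>
    induction y using TensorProduct.induction_on with
    | zero => exact h0
    | tmul m n => exact ht m n
    | add a b hha hhb =>
      have := ha _ _ hha hhb
      exact this

theorem ind_on {P : BalTensor S M N → Prop} (x : BalTensor S M N) (h0 : P 0)
    (ht : ∀ m n, P (tmul S M N m n))
    (ha : ∀ x y, P x → P y → P (x + y)) : P x :=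
  ind h0 ht ha x

theorem zero_left (n : N) : tmul S M N 0 n = 0 := by
  show QuotientAddGroup.mk _ = QuotientAddGroup.mk 0
  rw [TensorProduct.zero_tmul]

theorem zero_right (m : M) : tmul S M N m 0 = 0 := by
  show QuotientAddGroup.mk _ = QuotientAddGroup.mk 0
  rw [TensorProduct.tmul_zero]

theorem add_left (m m' : M) (n : N) :
    tmul S M N (m + m') n = tmul S M N m n + tmul S M N m' n := by
  show QuotientAddGroup.mk _ = _
  rw [TensorProduct.add_tmul, QuotientAddGroup.mk_add]
  rfl

theorem add_right (m : M) (n n' : N) :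
    tmul S M N m (n + n') = tmul S M N m n + tmul S M N m n' := by
  show QuotientAddGroup.mk _ = _
  rw [TensorProduct.tmul_add, QuotientAddGroup.mk_add]
  rfl

theorem balanced (s : S) (m : M) (n : N) :
    tmul S M N (op s • m) n = tmul S M N m (s • n) := by
  have hmem : (op s • m) ⊗ₜ[ℤ] n - m ⊗ₜ[ℤ] (s • n) ∈ balRel S M N :=
    AddSubgroup.subset_closure ⟨m, s, n, rfl⟩
  refine (QuotientAddGroup.eq).2 ?_
  simpa [sub_eq_add_neg, add_comm] using neg_mem hmem

variable {A : Type*} [AddCommGroup A]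

/-- Lift a balanced biadditive map to the balanced tensor product. -/
noncomputable
def lift (b : M →+ N →+ A)
    (hb : ∀ (s : S) (m : M) (n : N), b (op s • m) n = b m (s • n)) :
    BalTensor S M N →+ A :=
  letI L : M ⊗[ℤ] N →+ A :=
    TensorProduct.liftAddHom b (fun z m n => by simp [map_zsmul, AddMonoidHom.smul_apply])
  QuotientAddGroup.lift _ L (by
    intro x hx
    refine (AddSubgroup.closure_le _).2 ?_ hx
    rintro y ⟨m, s, n, rfl⟩
    simp only [SetLike.mem_coe, AddMonoidHom.mem_ker, map_sub, L,
      TensorProduct.liftAddHom_tmul]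
    rw [hb, sub_self])

@[simp] theorem lift_tmul (b : M →+ N →+ A) (hb) (m : M) (n : N) :
    lift b hb (tmul S M N m n) = b m n := rfl

theorem addHom_ext {f g : BalTensor S M N →+ A}
    (h : ∀ m n, f (tmul S M N m n) = g (tmul S M N m n)) : f = g :=
  AddMonoidHom.ext <| ind (by simp) h (fun x y hx hy => by simp [map_add, hx, hy])

end Paper.BalTensor

/-- Morita equivalence data for two rings `R` and `S`: an `(R,S)`-bimodule `M` and an
`(S,R)`-bimodule `N` together with an isomorphism of `(R,R)`-bimodules `M ⊗[S] N ≅ R`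
and an isomorphism of `(S,S)`-bimodules `N ⊗[R] M ≅ S`, where `R` and `S` carry their
canonical bimodule structures given by ring multiplication. -/
structure MoritaContext (R S : Type u) [Ring R] [Ring S] : Type (u + 1) where
  M : Type u
  N : Type u
  [addCommGroupM : AddCommGroup M]
  [modRM : Module R M]
  [modSopM : Module Sᵐᵒᵖ M]
  [smulCommM : SMulCommClass R Sᵐᵒᵖ M]
  [addCommGroupN : AddCommGroup N]
  [modSN : Module S N]
  [modRopN : Module Rᵐᵒᵖ N]
  [smulCommN : SMulCommClass S Rᵐᵒᵖ N]
  eR : BalTensor S M N ≃+ R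
  eR_left : ∀ (r : R) (x : BalTensor S M N), eR (r • x) = r * eR x
  eR_right : ∀ (r : R) (x : BalTensor S M N), eR (op r • x) = eR x * r
  eS : BalTensor R N M ≃+ S
  eS_left : ∀ (s : S) (x : BalTensor R N M), eS (s • x) = s * eS x
  eS_right : ∀ (s : S) (x : BalTensor R N M), eS (op s • x) = eS x * s


attribute [instance] MoritaContext.addCommGroupM MoritaContext.modRM
  MoritaContext.modSopM MoritaContext.smulCommM MoritaContext.addCommGroupN
  MoritaContext.modSN MoritaContext.modRopN MoritaContext.smulCommN

namespace MoritaProof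

open Paper CategoryTheory

section Functors

variable (R S : Type u) [Ring R] [Ring S]
variable (N : Type u) [AddCommGroup N] [Module S N] [Module Rᵐᵒᵖ N] [SMulCommClass S Rᵐᵒᵖ N]

/-- The map `N ⊗[R] X →+ N ⊗[R] Y` induced by an `R`-linear map `f : X → Y`. -/
noncomputable def balMap {X Y : ModuleCat.{u} R} (f : X ⟶ Y) :
    BalTensor R N X →+ BalTensor R N Y :=
  BalTensor.lift
    (AddMonoidHom.mk' (fun n => AddMonoidHom.mk'
        (fun x => BalTensor.tmul R N Y n (f x))
        (fun x y => by simp only []; rw [map_add, BalTensor.add_right]))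
      (fun n n' => AddMonoidHom.ext fun x => by
        simp only [AddMonoidHom.mk'_apply, AddMonoidHom.add_apply, BalTensor.add_left]))
    (fun r n x => by
      simp only [AddMonoidHom.mk'_apply]
      rw [BalTensor.balanced, map_smul])

@[simp] theorem balMap_tmul {X Y : ModuleCat.{u} R} (f : X ⟶ Y) (n : N) (x : X) :
    balMap R N f (BalTensor.tmul R N X n x) = BalTensor.tmul R N Y n (f x) := rfl

theorem balMap_smul {X Y : ModuleCat.{u} R} (f : X ⟶ Y) (s : S) :
    ∀ w : BalTensor R N X, balMap R N f (s • w) = s • balMap R N f w := by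
  refine BalTensor.ind ?_ ?_ ?_
  · erw [smul_zero, map_zero, smul_zero]
  · intro n x
    rw [BalTensor.smul_tmul S R N X s n x, balMap_tmul, balMap_tmul,
      BalTensor.smul_tmul S R N Y s n (f x)]
  · intro a b ha hb
    erw [smul_add, map_add, ha, hb, map_add, smul_add]
    rfl

/-- The functor `X ↦ N ⊗[R] X` from left `R`-modules to left `S`-modules, for an
`(S,R)`-bimodule `N`. -/
noncomputable def balFunctor : ModuleCat.{u} R ⥤ ModuleCat.{u} S where
  obj X := ModuleCat.of S (BalTensor R N X)
  map {X Y} f := ModuleCat.ofHom (LinearMap.mk ⟨balMap R N f, map_add _⟩ (balMap_smul R S N f))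
  map_id X := by
    apply ModuleCat.hom_ext
    apply LinearMap.ext
    refine BalTensor.ind ?_ (fun n x => rfl) ?_
    · simp
    · intro a b ha hb
      show balMap R N (𝟙 X) (a + b) = a + b
      rw [map_add]; exact congrArg₂ (· + ·) ha hb
  map_comp {X Y Z} f g := by
    apply ModuleCat.hom_ext
    apply LinearMap.ext
    refine BalTensor.ind ?_ (fun n x => rfl) ?_
    · simp
    · intro a b ha hb
      show balMap R N (f ≫ g) (a + b) = balMap R N g (balMap R N f (a + b))
      rw [map_add, map_add, map_add]
      exact congrArg₂ (· + ·) ha hb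

instance balFunctor_additive : (balFunctor R S N).Additive where
  map_add {X Y f g} := by
    apply ModuleCat.hom_ext
    apply LinearMap.ext
    refine BalTensor.ind ?_ ?_ ?_
    · exact (map_zero _).trans (map_zero _).symm
    · intro n x
      show BalTensor.tmul R N _ n ((f + g) x) =
        ((balFunctor R S N).map f + (balFunctor R S N).map g) (BalTensor.tmul R N _ n x)
      exact BalTensor.add_right _ _ _
    · intro a b ha hb
      exact (map_add _ a b).trans ((congrArg₂ (· + ·) ha hb).trans (map_add _ a b).symm)

end Functors

end MoritaProof

namespace MoritaProof

open Paper CategoryTheory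

set_option linter.unusedSectionVars false

section NatIso

variable (R S : Type u) [Ring R] [Ring S]
variable (N : Type u) [AddCommGroup N] [Module S N] [Module Rᵐᵒᵖ N] [SMulCommClass S Rᵐᵒᵖ N]
variable (M : Type u) [AddCommGroup M] [Module R M] [Module Sᵐᵒᵖ M] [SMulCommClass R Sᵐᵒᵖ M]
variable (er : BalTensor S M N ≃+ R)
variable (hl : ∀ (r : R) (x : BalTensor S M N), er (r • x) = r * er x)
variable (hr : ∀ (r : R) (x : BalTensor S M N), er (op r • x) = er x * r)

include hl hr in
theorem er_swap (u v : BalTensor S M N) : op (er v) • u = (er u) • v :=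
  er.injective (by rw [hr, hl])

variable (X : ModuleCat.{u} R)

/-- The evaluation map `M ⊗[S] (N ⊗[R] X) → X`, `m ⊗ n ⊗ x ↦ e(m ⊗ n) • x`. -/
noncomputable def alphaHom : BalTensor S M (BalTensor R N X) →+ X :=
  BalTensor.lift
    (AddMonoidHom.mk' (fun m => BalTensor.lift
      (AddMonoidHom.mk'
          (fun n => DistribMulAction.toAddMonoidHom X (er (BalTensor.tmul S M N m n)))
          (fun n n' => by
            ext x
            simp [BalTensor.add_right, add_smul]))
      (fun r n x => by
        simp only [AddMonoidHom.mk'_apply, DistribMulAction.toAddMonoidHom_apply]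
        rw [← BalTensor.tmul_smul S R M N (op r) m n, hr, mul_smul]))
      (fun m m' => by
        refine BalTensor.addHom_ext fun n x => ?_
        simp [BalTensor.add_left, add_smul]))
    (by
      intro s m w
      induction w using BalTensor.ind_on with
      | h0 => simp
      | ht n x =>
        simp only [AddMonoidHom.mk'_apply]
        erw [BalTensor.smul_tmul S R N X s n x]
        simp only [BalTensor.lift_tmul, AddMonoidHom.mk'_apply,
          DistribMulAction.toAddMonoidHom_apply]
        rw [BalTensor.balanced]
      | ha a b iha ihb =>
        exact ((map_add _ a b).trans (congrArg₂ (· + ·) iha ihb)).trans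
          ((map_add _ _ _).symm.trans (congrArg _ (smul_add s a b).symm)))

@[simp] theorem alphaHom_tmul (m : M) (n : N) (x : X) :
    alphaHom R S N M er hr X
      (BalTensor.tmul S M (BalTensor R N X) m (BalTensor.tmul R N X n x)) =
    er (BalTensor.tmul S M N m n) • x := rfl

/-- The map `(M ⊗[S] N) → (X →+ M ⊗[S] (N ⊗[R] X))`, `(m ⊗ n) ↦ (x ↦ m ⊗ n ⊗ x)`. -/
noncomputable def thetaHom : BalTensor S M N →+ (X →+ BalTensor S M (BalTensor R N X)) :=
  BalTensor.lift
    (AddMonoidHom.mk' (fun m => AddMonoidHom.mk'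
        (fun n => AddMonoidHom.mk'
          (fun x => BalTensor.tmul S M (BalTensor R N X) m (BalTensor.tmul R N X n x))
          (fun x x' => by
            rw [BalTensor.add_right, BalTensor.add_right]))
        (fun n n' => by
          ext x
          simp only [AddMonoidHom.mk'_apply, AddMonoidHom.add_apply]
          rw [BalTensor.add_left, BalTensor.add_right]))
      (fun m m' => by
        ext n x
        simp only [AddMonoidHom.mk'_apply, AddMonoidHom.add_apply]
        rw [BalTensor.add_left]))
    (fun s m n => by
      ext x
      simp only [AddMonoidHom.mk'_apply]
      rw [BalTensor.balanced]; erw [BalTensor.smul_tmul S R N X s n x])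

@[simp] theorem thetaHom_tmul (m : M) (n : N) (x : X) :
    thetaHom R S N M X (BalTensor.tmul S M N m n) x =
      BalTensor.tmul S M (BalTensor R N X) m (BalTensor.tmul R N X n x) := rfl

theorem alpha_theta (x : X) (w : BalTensor S M N) :
    alphaHom R S N M er hr X (thetaHom R S N M X w x) = er w • x := by
  induction w using BalTensor.ind_on with
  | h0 => simp
  | ht m n => rw [thetaHom_tmul, alphaHom_tmul]
  | ha a b iha ihb =>
    rw [map_add, AddMonoidHom.add_apply, map_add, iha, ihb, map_add, add_smul]

theorem theta_rsmul (r : R) (x : X) (w : BalTensor S M N) :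
    thetaHom R S N M X w (r • x) = thetaHom R S N M X (op r • w) x := by
  induction w using BalTensor.ind_on with
  | h0 => erw [smul_zero]; simp
  | ht m n =>
    rw [thetaHom_tmul, BalTensor.tmul_smul S R M N (op r) m n, thetaHom_tmul,
      ← BalTensor.balanced]
  | ha a b iha ihb =>
    rw [map_add, AddMonoidHom.add_apply]; erw [smul_add]
    rw [map_add, AddMonoidHom.add_apply, iha, ihb]
    rfl

include hl in
theorem alpha_smul (r : R) (z : BalTensor S M (BalTensor R N X)) :
    alphaHom R S N M er hr X (r • z) = r • alphaHom R S N M er hr X z := by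
  induction z using BalTensor.ind_on with
  | h0 => erw [smul_zero]; simp
  | ht m zi =>
    rw [BalTensor.smul_tmul R S M (BalTensor R N X) r m zi]
    induction zi using BalTensor.ind_on with
    | h0 => rw [BalTensor.zero_right, BalTensor.zero_right]; simp
    | ht n x =>
      rw [alphaHom_tmul, alphaHom_tmul, ← BalTensor.smul_tmul R S M N r m n, hl, mul_smul]
    | ha a b iha ihb =>
      rw [BalTensor.add_right, BalTensor.add_right, map_add, map_add, iha, ihb, smul_add]
  | ha a b iha ihb =>
    exact (congrArg (alphaHom R S N M er hr X) (smul_add r a b)).trans ((map_add _ _ _).trans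
      ((congrArg₂ (· + ·) iha ihb).trans ((smul_add r _ _).symm.trans
        (congrArg (r • ·) (map_add _ a b).symm))))

include hl in
/-- The natural isomorphism `M ⊗[S] (N ⊗[R] X) ≅ X` of `R`-modules. -/
noncomputable def alphaLinearEquiv : BalTensor S M (BalTensor R N X) ≃ₗ[R] X where
  toFun := alphaHom R S N M er hr X
  invFun := fun x => thetaHom R S N M X (er.symm 1) x
  map_add' := map_add _
  map_smul' := alpha_smul R S N M er hl hr X
  left_inv := by
    intro z
    show thetaHom R S N M X (er.symm 1) (alphaHom R S N M er hr X z) = z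
    induction z using BalTensor.ind_on with
    | h0 => simp
    | ht m zi =>
      induction zi using BalTensor.ind_on with
      | h0 => rw [BalTensor.zero_right]; simp
      | ht n x =>
        rw [alphaHom_tmul, theta_rsmul, er_swap R S N M er hl hr,
          AddEquiv.apply_symm_apply]
        erw [one_smul]
        rw [thetaHom_tmul]
      | ha a b iha ihb =>
        rw [BalTensor.add_right, map_add, map_add, iha, ihb]
    | ha a b iha ihb =>
      rw [map_add, map_add, iha, ihb]
  right_inv := by
    intro x
    show alphaHom R S N M er hr X (thetaHom R S N M X (er.symm 1) x) = x
    rw [alpha_theta R S N M er hr, AddEquiv.apply_symm_apply, one_smul]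

theorem alpha_natural {X Y : ModuleCat.{u} R} (f : X ⟶ Y)
    (z : BalTensor S M (BalTensor R N X)) :
    alphaHom R S N M er hr Y (balMap S M ((balFunctor R S N).map f) z) =
      f (alphaHom R S N M er hr X z) := by
  induction z using BalTensor.ind_on with
  | h0 =>
    simp
    exact (congrArg (alphaHom R S N M er hr Y) (map_zero _)).trans (map_zero _)
  | ht m zi =>
    show alphaHom R S N M er hr Y
        (BalTensor.tmul S M (BalTensor R N Y) m (balMap R N f zi)) =
      f (alphaHom R S N M er hr X (BalTensor.tmul S M (BalTensor R N X) m zi))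
    induction zi using BalTensor.ind_on with
    | h0 => simp [BalTensor.zero_right]
    | ht n x =>
      rw [balMap_tmul, alphaHom_tmul, alphaHom_tmul, map_smul]
    | ha a b iha ihb =>
      simp only [map_add, BalTensor.add_right, iha, ihb]
  | ha a b iha ihb =>
    simp only [map_add, iha, ihb]
    exact ((congrArg (alphaHom R S N M er hr Y) (map_add _ a b)).trans (map_add _ _ _)).trans
      (congrArg₂ (· + ·) iha ihb)

include hl in
/-- The natural isomorphism `(N ⊗[R] -) ⋙ (M ⊗[S] -) ≅ 𝟭`. -/
noncomputable def balNatIso : balFunctor R S N ⋙ balFunctor S R M ≅ 𝟭 (ModuleCat.{u} R) :=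
  NatIso.ofComponents
    (fun X =>
      { hom := ModuleCat.ofHom (alphaLinearEquiv R S N M er hl hr X).toLinearMap
        inv := ModuleCat.ofHom (alphaLinearEquiv R S N M er hl hr X).symm.toLinearMap
        hom_inv_id := ModuleCat.hom_ext <| LinearMap.ext fun z =>
          (alphaLinearEquiv R S N M er hl hr X).symm_apply_apply z
        inv_hom_id := ModuleCat.hom_ext <| LinearMap.ext fun x =>
          (alphaLinearEquiv R S N M er hl hr X).apply_symm_apply x })
    (fun {X Y} f => ModuleCat.hom_ext <| LinearMap.ext fun z => alpha_natural R S N M er hr f z)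

end NatIso

/-- The equivalence of module categories induced by a Morita context. -/
noncomputable def ctxEquiv {R S : Type u} [Ring R] [Ring S] (ctx : MoritaContext R S) :
    ModuleCat.{u} R ≌ ModuleCat.{u} S :=
  CategoryTheory.Equivalence.mk (balFunctor R S ctx.N) (balFunctor S R ctx.M)
    (balNatIso R S ctx.N ctx.M ctx.eR ctx.eR_left ctx.eR_right).symm
    (balNatIso S R ctx.M ctx.N ctx.eS ctx.eS_left ctx.eS_right)

theorem ctxEquiv_additive {R S : Type u} [Ring R] [Ring S] (ctx : MoritaContext R S) :
    (ctxEquiv ctx).functor.Additive :=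
  balFunctor_additive R S ctx.N

end MoritaProof

namespace MoritaProof

open Paper CategoryTheory

set_option linter.unusedSectionVars false

section Backward

variable {R S : Type u} [Ring R] [Ring S]

/-- Right multiplication as an endomorphism of a ring, viewed as a left module
over itself. -/
def rmulHom {A : Type u} [Ring A] (a : A) : ModuleCat.of A A ⟶ ModuleCat.of A A :=
  ModuleCat.ofHom <| LinearMap.mk ⟨fun (t : A) => t * a, fun (s t : A) => add_mul s t a⟩
    (fun (s t : A) => by simp [smul_eq_mul, mul_assoc])

@[simp] theorem rmulHom_apply {A : Type u} [Ring A] (a : A) (t : A) : rmulHom a t = t * a := rfl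

variable (e : ModuleCat.{u} R ≌ ModuleCat.{u} S) [e.functor.Additive]

/-- The right `S`-module structure on `e.inverse.obj S`, via functoriality. -/
noncomputable def rightModule : Module Sᵐᵒᵖ ↥(e.inverse.obj (ModuleCat.of S S)) where
  smul x m := e.inverse.map (rmulHom x.unop) m
  one_smul m := by
    show e.inverse.map (rmulHom ((1 : Sᵐᵒᵖ).unop)) m = m
    rw [show rmulHom ((1 : Sᵐᵒᵖ).unop) = 𝟙 (ModuleCat.of S S) from
      ModuleCat.hom_ext <| LinearMap.ext fun (t : S) => mul_one t, e.inverse.map_id]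
    rfl
  mul_smul x y m := by
    show e.inverse.map (rmulHom ((x * y).unop)) m =
      e.inverse.map (rmulHom x.unop) (e.inverse.map (rmulHom y.unop) m)
    rw [show rmulHom ((x * y).unop) = rmulHom y.unop ≫ rmulHom x.unop from
      ModuleCat.hom_ext <| LinearMap.ext fun (t : S) => (mul_assoc t y.unop x.unop).symm, e.inverse.map_comp]
    rfl
  smul_zero x := map_zero _
  smul_add x a b := map_add _ a b
  add_smul x y m := by
    show e.inverse.map (rmulHom ((x + y).unop)) m = _
    rw [show rmulHom ((x + y).unop) = rmulHom x.unop + rmulHom y.unop from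
      ModuleCat.hom_ext <| LinearMap.ext fun (t : S) => mul_add t x.unop y.unop, e.inverse.map_add]
    rfl
  zero_smul m := by
    show e.inverse.map (rmulHom ((0 : Sᵐᵒᵖ).unop)) m = 0
    rw [show rmulHom ((0 : Sᵐᵒᵖ).unop) = 0 from ModuleCat.hom_ext <| LinearMap.ext fun (t : S) => mul_zero t,
      e.inverse.map_zero]
    rfl

attribute [local instance] rightModule

theorem rightModule_smul (s : S) (m : ↥(e.inverse.obj (ModuleCat.of S S))) :
    op s • m = e.inverse.map (rmulHom s) m := rfl

noncomputable instance rightSMulComm :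
    SMulCommClass R Sᵐᵒᵖ ↥(e.inverse.obj (ModuleCat.of S S)) where
  smul_comm r x m := (map_smul (e.inverse.map (rmulHom x.unop)).hom r m).symm

/-- `s ↦ s • y` as a morphism of `S`-modules. -/
def yhat {Y : ModuleCat.{u} S} (y : Y) : ModuleCat.of S S ⟶ Y :=
  ModuleCat.ofHom <| LinearMap.mk ⟨fun (s : S) => s • y, fun (s t : S) => add_smul s t y⟩
    (fun (s t : S) => by simp [smul_eq_mul, mul_smul])

@[simp] theorem yhat_apply {Y : ModuleCat.{u} S} (y : Y) (s : S) : yhat y s = s • y := rfl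

theorem yhat_add {Y : ModuleCat.{u} S} (y y' : Y) : yhat (y + y') = yhat y + yhat y' :=
  ModuleCat.hom_ext <| LinearMap.ext fun (s : S) => smul_add s y y'

/-- The comparison map `M ⊗[S] Y → G Y`, where `M = G S`. -/
noncomputable def kappa (Y : ModuleCat.{u} S) :
    BalTensor S ↥(e.inverse.obj (ModuleCat.of S S)) ↥Y →+ ↥(e.inverse.obj Y) :=
  BalTensor.lift
    (AddMonoidHom.mk'
      (fun m => AddMonoidHom.mk' (fun y => e.inverse.map (yhat y) m)
        (fun y y' => by
          beta_reduce
          rw [yhat_add, e.inverse.map_add]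
          rfl))
      (fun m m' => by
        ext y
        show e.inverse.map (yhat y) (m + m') =
          e.inverse.map (yhat y) m + e.inverse.map (yhat y) m'
        rw [map_add]))
    (fun s m y => by
      have hc : rmulHom s ≫ yhat y = yhat (s • y) :=
        ModuleCat.hom_ext <| LinearMap.ext fun (t : S) => by
          show (t * s) • y = t • (s • y)
          rw [mul_smul]
      have h2 : e.inverse.map (yhat (s • y)) =
          e.inverse.map (rmulHom s) ≫ e.inverse.map (yhat y) := by
        rw [← Functor.map_comp, hc]
      rw [rightModule_smul]
      exact (ConcreteCategory.congr_hom h2 m).symm)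

@[simp] theorem kappa_tmul (Y : ModuleCat.{u} S)
    (m : ↥(e.inverse.obj (ModuleCat.of S S))) (y : Y) :
    kappa e Y (BalTensor.tmul S _ ↥Y m y) = e.inverse.map (yhat y) m := rfl

theorem kappa_smul (Y : ModuleCat.{u} S) (r : R) (w) :
    kappa e Y (r • w) = r • kappa e Y w := by
  induction w using BalTensor.ind_on with
  | h0 => erw [smul_zero]; simp
  | ht m y =>
    rw [BalTensor.smul_tmul R S _ ↥Y r m y, kappa_tmul, kappa_tmul, map_smul]
  | ha a b iha ihb =>
    exact (congrArg (kappa e Y) (smul_add r a b)).trans ((map_add _ _ _).trans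
      ((congrArg₂ (· + ·) iha ihb).trans ((smul_add r _ _).symm.trans
        (congrArg (r • ·) (map_add _ a b).symm))))

/-- `kappa` as a morphism of `R`-modules. -/
noncomputable def kappaLin (Y : ModuleCat.{u} S) :
    ModuleCat.of R (BalTensor S ↥(e.inverse.obj (ModuleCat.of S S)) ↥Y) ⟶ e.inverse.obj Y :=
  ModuleCat.ofHom <| LinearMap.mk ⟨kappa e Y, map_add _⟩ (kappa_smul e Y)

/-- `m ↦ m ⊗ y` as a morphism of `R`-modules. -/
noncomputable def ahat (Y : ModuleCat.{u} S) (y : Y) :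
    e.inverse.obj (ModuleCat.of S S) ⟶
      ModuleCat.of R (BalTensor S ↥(e.inverse.obj (ModuleCat.of S S)) ↥Y) :=
  ModuleCat.ofHom <| LinearMap.mk ⟨fun m => BalTensor.tmul S _ ↥Y m y,
      fun m m' => BalTensor.add_left m m' y⟩
    (fun r m => (BalTensor.smul_tmul R S _ ↥Y r m y).symm)

theorem ahat_add (Y : ModuleCat.{u} S) (y y' : Y) :
    ahat e Y (y + y') = ahat e Y y + ahat e Y y' :=
  ModuleCat.hom_ext <| LinearMap.ext fun m => BalTensor.add_right m y y'

/-- The distinguished element `ε⁻¹(1)` of `F (G S)`. -/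
noncomputable def w0 : ↥(e.functor.obj (e.inverse.obj (ModuleCat.of S S))) :=
  e.counitInv.app (ModuleCat.of S S) (1 : S)

theorem counitInv_apply (s : S) :
    e.counitInv.app (ModuleCat.of S S) s = s • w0 e := by
  show e.counitInv.app (ModuleCat.of S S) s = s • e.counitInv.app (ModuleCat.of S S) (1 : S)
  rw [← map_smul, smul_eq_mul, mul_one]

theorem smul_w0 (s : S) :
    e.functor.map (e.inverse.map (rmulHom s)) (w0 e) = s • w0 e := by
  have h := ConcreteCategory.congr_hom (e.counitInv.naturality (rmulHom s)) (1 : S)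
  have h2 : e.counitInv.app (ModuleCat.of S S) ((1 : S) * s) =
      e.functor.map (e.inverse.map (rmulHom s)) (w0 e) := h
  rw [one_mul, counitInv_apply] at h2
  exact h2.symm

/-- The map `y ↦ F(m ↦ m ⊗ y)(ε⁻¹ 1) : Y ⟶ F (M ⊗[S] Y)`. -/
noncomputable def nuHom (Y : ModuleCat.{u} S) :
    Y ⟶ e.functor.obj
      (ModuleCat.of R (BalTensor S ↥(e.inverse.obj (ModuleCat.of S S)) ↥Y)) :=
  ModuleCat.ofHom <| LinearMap.mk ⟨fun y => e.functor.map (ahat e Y y) (w0 e),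
      fun y y' => by
        beta_reduce
        rw [ahat_add, e.functor.map_add]
        rfl⟩
    (fun s y => by
      show e.functor.map (ahat e Y (s • y)) (w0 e) =
        s • e.functor.map (ahat e Y y) (w0 e)
      have h1 : ahat e Y (s • y) = e.inverse.map (rmulHom s) ≫ ahat e Y y :=
        ModuleCat.hom_ext <| LinearMap.ext fun m => (BalTensor.balanced s m y).symm
      rw [h1, Functor.map_comp]
      show e.functor.map (ahat e Y y) (e.functor.map (e.inverse.map (rmulHom s)) (w0 e)) = _
      rw [smul_w0, map_smul])

/-- The inverse comparison map `G Y ⟶ M ⊗[S] Y`. -/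
noncomputable def psi (Y : ModuleCat.{u} S) :
    e.inverse.obj Y ⟶
      ModuleCat.of R (BalTensor S ↥(e.inverse.obj (ModuleCat.of S S)) ↥Y) :=
  e.inverse.map (nuHom e Y) ≫
    e.unitInv.app (ModuleCat.of R (BalTensor S ↥(e.inverse.obj (ModuleCat.of S S)) ↥Y))

theorem psi_kappa (Y : ModuleCat.{u} S) (w) : psi e Y (kappa e Y w) = w := by
  induction w using BalTensor.ind_on with
  | h0 => simp
  | ht m y =>
    have c1 : yhat y ≫ nuHom e Y = yhat (nuHom e Y y) :=
      ModuleCat.hom_ext <| LinearMap.ext fun (s : S) => map_smul (nuHom e Y).hom s y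
    have c2 : yhat (nuHom e Y y) =
        e.counitInv.app (ModuleCat.of S S) ≫ e.functor.map (ahat e Y y) :=
      ModuleCat.hom_ext <| LinearMap.ext fun (s : S) => by
        show s • nuHom e Y y = e.functor.map (ahat e Y y) (e.counitInv.app _ s)
        rw [counitInv_apply, map_smul]
        rfl
    have hcomp : e.inverse.map (yhat y ≫ nuHom e Y) m =
        e.inverse.map (nuHom e Y) (e.inverse.map (yhat y) m) := by
      rw [Functor.map_comp]; rfl
    show e.unitInv.app _ (e.inverse.map (nuHom e Y) (e.inverse.map (yhat y) m)) =
      BalTensor.tmul S _ ↥Y m y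
    rw [← hcomp, c1, c2, Functor.map_comp]
    show e.unitInv.app _ (e.inverse.map (e.functor.map (ahat e Y y))
      (e.inverse.map (e.counitInv.app (ModuleCat.of S S)) m)) = _
    have hnat := ConcreteCategory.congr_hom (e.unitInv.naturality (ahat e Y y))
      (e.inverse.map (e.counitInv.app (ModuleCat.of S S)) m)
    rw [show e.unitInv.app _ (e.inverse.map (e.functor.map (ahat e Y y))
        (e.inverse.map (e.counitInv.app (ModuleCat.of S S)) m)) =
      ahat e Y y (e.unitInv.app _ (e.inverse.map (e.counitInv.app (ModuleCat.of S S)) m))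
      from hnat]
    have h3 := ConcreteCategory.congr_hom (e.inverse_counitInv_comp (ModuleCat.of S S)) m
    rw [show e.unitInv.app _ (e.inverse.map (e.counitInv.app (ModuleCat.of S S)) m) = m from h3]
    rfl
  | ha a b iha ihb =>
    rw [map_add, map_add, iha, ihb]

theorem kappa_injective (Y : ModuleCat.{u} S) : Function.Injective (kappa e Y) :=
  Function.LeftInverse.injective (g := psi e Y) (psi_kappa e Y)

theorem kappa_surjective (Y : ModuleCat.{u} S) : Function.Surjective (kappa e Y) := by
  set H : Submodule R ↥(e.inverse.obj Y) := LinearMap.range (kappaLin e Y).hom with hH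
  suffices htop : H = ⊤ by
    intro g
    have : g ∈ H := htop ▸ Submodule.mem_top
    obtain ⟨w, hw⟩ := this
    exact ⟨w, hw⟩
  by_contra hne
  -- quotient argument
  have main : ∀ g : ↥(e.inverse.obj Y), g ∈ H := by
    intro g
    let Q : ModuleCat.{u} R := ModuleCat.of R (↥(e.inverse.obj Y) ⧸ H)
    let q : e.inverse.obj Y ⟶ Q := ModuleCat.ofHom H.mkQ
    let Y' : ModuleCat.{u} S := e.inverse.objPreimage Q
    let i : e.inverse.obj Y' ≅ Q := e.inverse.objObjPreimageIso Q
    let f : Y ⟶ Y' := e.inverse.preimage (q ≫ i.inv)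
    have hf : e.inverse.map f = q ≫ i.inv := e.inverse.map_preimage _
    have h0 : ∀ y : Y, yhat y ≫ f = 0 := by
      intro y
      apply e.inverse.map_injective
      rw [Functor.map_comp, hf, e.inverse.map_zero]
      apply ModuleCat.hom_ext
      apply LinearMap.ext
      intro m
      show i.inv (q (e.inverse.map (yhat y) m)) = 0
      have hmem : e.inverse.map (yhat y) m ∈ H := ⟨BalTensor.tmul S _ ↥Y m y, rfl⟩
      have : q (e.inverse.map (yhat y) m) = 0 := (Submodule.Quotient.mk_eq_zero H).2 hmem
      rw [this, map_zero]
    have hfy : ∀ y : Y, f y = 0 := by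
      intro y
      have h2 : f ((1 : S) • y) = 0 := ConcreteCategory.congr_hom (h0 y) (1 : S)
      rwa [one_smul] at h2
    have hf0 : f = 0 := ModuleCat.hom_ext (LinearMap.ext hfy)
    have hq : q ≫ i.inv = 0 := by rw [← hf, hf0, e.inverse.map_zero]
    have hq0 : q = 0 := by
      have : (q ≫ i.inv) ≫ i.hom = q := by
        rw [Category.assoc, Iso.inv_hom_id, Category.comp_id]
      rw [← this, hq, Limits.zero_comp]
    have : q g = 0 := by rw [hq0]; rfl
    exact (Submodule.Quotient.mk_eq_zero H).1 this
  exact hne (Submodule.eq_top_iff'.2 main)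

/-- The comparison map as an additive isomorphism. -/
noncomputable def kappaEquiv (Y : ModuleCat.{u} S) :
    BalTensor S ↥(e.inverse.obj (ModuleCat.of S S)) ↥Y ≃+ ↥(e.inverse.obj Y) :=
  AddEquiv.ofBijective (kappa e Y) ⟨kappa_injective e Y, kappa_surjective e Y⟩

noncomputable instance symmFunctorAdditive : e.symm.functor.Additive :=
  Equivalence.inverse_additive e

/-- The unit isomorphism `G (F R) ≅ R` as an additive equivalence. -/
noncomputable def unitAddEquiv :
    ↥(e.inverse.obj (e.functor.obj (ModuleCat.of R R))) ≃+ R where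
  toFun := (e.unitInv.app (ModuleCat.of R R)).hom
  invFun := (e.unit.app (ModuleCat.of R R)).hom
  left_inv u := ConcreteCategory.congr_hom (Iso.inv_hom_id (e.unitIso.app (ModuleCat.of R R))) u
  right_inv r := ConcreteCategory.congr_hom (Iso.hom_inv_id (e.unitIso.app (ModuleCat.of R R))) r
  map_add' := map_add _

/-- The additive equivalence `G S ⊗[S] F R ≃ R`. -/
noncomputable def mainEquiv :
    BalTensor S ↥(e.inverse.obj (ModuleCat.of S S))
      ↥(e.symm.inverse.obj (ModuleCat.of R R)) ≃+ R :=
  (kappaEquiv e (e.symm.inverse.obj (ModuleCat.of R R))).trans (unitAddEquiv e)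

theorem unitAddEquiv_smul (r : R) (u) :
    unitAddEquiv e (r • u) = r * unitAddEquiv e u :=
  map_smul (e.unitInv.app (ModuleCat.of R R)).hom r u

theorem unitAddEquiv_map (r : R) (u) :
    unitAddEquiv e (e.inverse.map (e.symm.inverse.map (rmulHom r)) u) =
      unitAddEquiv e u * r :=
  ConcreteCategory.congr_hom (e.unitInv.naturality (rmulHom r)) u

theorem mainEquiv_left (r : R) (x) : mainEquiv e (r • x) = r * mainEquiv e x := by
  show unitAddEquiv e (kappa e (e.symm.inverse.obj (ModuleCat.of R R)) (r • x)) =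
    r * unitAddEquiv e (kappa e (e.symm.inverse.obj (ModuleCat.of R R)) x)
  rw [kappa_smul]
  exact unitAddEquiv_smul e r _

theorem mainEquiv_right (r : R) (x) : mainEquiv e (op r • x) = mainEquiv e x * r := by
  have h1 : ∀ w, kappa e (e.symm.inverse.obj (ModuleCat.of R R)) (op r • w) =
      e.inverse.map (e.symm.inverse.map (rmulHom r))
        (kappa e (e.symm.inverse.obj (ModuleCat.of R R)) w) := by
    intro w
    induction w using BalTensor.ind_on with
    | h0 => erw [smul_zero]; rw [map_zero, map_zero]
    | ht m n =>
      have hy : yhat ((e.symm.inverse.map (rmulHom r)) n) =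
          yhat n ≫ e.symm.inverse.map (rmulHom r) :=
        ModuleCat.hom_ext <| LinearMap.ext fun (s : S) =>
          (map_smul (e.symm.inverse.map (rmulHom r)).hom s n).symm
      rw [BalTensor.tmul_smul S R _ _ (op r) m n]
      show e.inverse.map (yhat ((e.symm.inverse.map (rmulHom r)) n)) m = _
      rw [hy, Functor.map_comp]
      rfl
    | ha a b iha ihb =>
      exact (congrArg (kappa e _) (smul_add (op r) a b)).trans ((map_add _ _ _).trans
        ((congrArg₂ (· + ·) iha ihb).trans ((map_add _ _ _).symm.trans
          (congrArg (fun z => e.inverse.map (e.symm.inverse.map (rmulHom r)) z)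
            (map_add _ a b).symm))))
  show unitAddEquiv e (kappa e (e.symm.inverse.obj (ModuleCat.of R R)) (op r • x)) =
    unitAddEquiv e (kappa e (e.symm.inverse.obj (ModuleCat.of R R)) x) * r
  rw [h1]
  exact unitAddEquiv_map e r _

/-- The Morita context attached to an additive equivalence of module categories. -/
noncomputable def ctxOfEquiv : MoritaContext R S where
  M := ↥(e.inverse.obj (ModuleCat.of S S))
  N := ↥(e.symm.inverse.obj (ModuleCat.of R R))
  eR := mainEquiv e
  eR_left := mainEquiv_left e
  eR_right := mainEquiv_right e
  eS := mainEquiv e.symm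
  eS_left := mainEquiv_left e.symm
  eS_right := mainEquiv_right e.symm

end Backward

end MoritaProof
/-- **Morita's theorem.** Two rings `R` and `S` are isomorphic objects in the
bicategory of rings and bimodules — i.e. there exist an `(R,S)`-bimodule `M` and an
`(S,R)`-bimodule `N` together with an `(R,R)`-bimodule isomorphism `M ⊗[S] N ≅ R` and an
`(S,S)`-bimodule isomorphism `N ⊗[R] M ≅ S` — if and only if there is an additive
equivalence between the category of left `R`-modules and the category of left
`S`-modules. -/
theorem morita_theorem (R S : Type u) [Ring R] [Ring S] :
    Nonempty (MoritaContext R S) ↔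
      ∃ e : ModuleCat.{u} R ≌ ModuleCat.{u} S, e.functor.Additive := by
  constructor
  · rintro ⟨ctx⟩
    exact ⟨MoritaProof.ctxEquiv ctx, MoritaProof.ctxEquiv_additive ctx⟩
  · rintro ⟨e, he⟩
    exact ⟨MoritaProof.ctxOfEquiv e⟩
end

section
/- Let R and S be rings admitting an additive equivalence between their categories of left modules. Then for every ring T there is an additive equivalence between the category of (R,T)-bimodules with bimodule homomorphisms and the category of (S,T)-bimodules with bimodule homomorphisms; equivalently, the categories of left modules over R ⊗[ℤ] Tᵒᵖ and over S ⊗[ℤ] Tᵒᵖ are additively equivalent. -/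
open CategoryTheory
open scoped TensorProduct

universe u

namespace ModuleEquivFibered
variable {A B T : Type u} [Ring A] [Ring B] [Ring T]

def tsmul (M : ModuleCat.{u} (A ⊗[ℤ] Tᵐᵒᵖ)) (x : A ⊗[ℤ] Tᵐᵒᵖ) (m : M) : M := x • m
lemma tsmul_mul (M : ModuleCat.{u} (A ⊗[ℤ] Tᵐᵒᵖ)) (x y : A ⊗[ℤ] Tᵐᵒᵖ) (m : M) :
    tsmul M (x * y) m = tsmul M x (tsmul M y m) := mul_smul x y m
lemma tsmul_add (M : ModuleCat.{u} (A ⊗[ℤ] Tᵐᵒᵖ)) (x : A ⊗[ℤ] Tᵐᵒᵖ) (m m' : M) :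
    tsmul M x (m + m') = tsmul M x m + tsmul M x m' := smul_add x m m'
lemma tsmul_one (M : ModuleCat.{u} (A ⊗[ℤ] Tᵐᵒᵖ)) (m : M) :
    tsmul M 1 m = m := one_smul _ m
lemma tsmul_zero_left (M : ModuleCat.{u} (A ⊗[ℤ] Tᵐᵒᵖ)) (m : M) :
    tsmul M 0 m = 0 := zero_smul (A ⊗[ℤ] Tᵐᵒᵖ) m
lemma tsmul_add_left (M : ModuleCat.{u} (A ⊗[ℤ] Tᵐᵒᵖ)) (x y : A ⊗[ℤ] Tᵐᵒᵖ) (m : M) :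
    tsmul M (x + y) m = tsmul M x m + tsmul M y m := add_smul x y m

noncomputable def res (M : ModuleCat.{u} (A ⊗[ℤ] Tᵐᵒᵖ)) : ModuleCat.{u} A :=
  @ModuleCat.of A _ M _
    (Module.compHom M (Algebra.TensorProduct.includeLeftRingHom (R := ℤ) (A := A) (B := Tᵐᵒᵖ)))
lemma res_smul (M : ModuleCat.{u} (A ⊗[ℤ] Tᵐᵒᵖ)) (a : A) (m : res (T := T) M) :
    a • m = tsmul M (a ⊗ₜ (1 : Tᵐᵒᵖ)) m := rfl

noncomputable def tAct (M : ModuleCat.{u} (A ⊗[ℤ] Tᵐᵒᵖ)) (t : Tᵐᵒᵖ) :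
    res (T := T) M ⟶ res M := ModuleCat.ofHom (X := res (T := T) M) (Y := res (T := T) M) {
  toFun := fun m => tsmul M ((1:A) ⊗ₜ t) m
  map_add' := fun x y => tsmul_add M _ x y
  map_smul' := fun a m => by
    show tsmul M ((1:A) ⊗ₜ t) (tsmul M (a ⊗ₜ (1:Tᵐᵒᵖ)) m)
      = tsmul M (a ⊗ₜ (1:Tᵐᵒᵖ)) (tsmul M ((1:A) ⊗ₜ t) m)
    erw [← tsmul_mul, ← tsmul_mul, Algebra.TensorProduct.tmul_mul_tmul,
      Algebra.TensorProduct.tmul_mul_tmul, one_mul, mul_one, one_mul, mul_one] }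
lemma tAct_apply (M : ModuleCat.{u} (A ⊗[ℤ] Tᵐᵒᵖ)) (t : Tᵐᵒᵖ) (m : res (T := T) M) :
    tAct M t m = tsmul M ((1:A) ⊗ₜ t) m := rfl

lemma tAct_one (M : ModuleCat.{u} (A ⊗[ℤ] Tᵐᵒᵖ)) : tAct (T := T) M 1 = 𝟙 (res M) := by
  ext m
  show tsmul M ((1:A) ⊗ₜ (1:Tᵐᵒᵖ)) m = m
  exact tsmul_one M m
lemma tAct_mul (M : ModuleCat.{u} (A ⊗[ℤ] Tᵐᵒᵖ)) (t t' : Tᵐᵒᵖ) :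
    tAct (T := T) M (t * t') = tAct M t' ≫ tAct M t := by
  ext m
  show tsmul M ((1:A) ⊗ₜ (t * t')) m = tsmul M ((1:A) ⊗ₜ t) (tsmul M ((1:A) ⊗ₜ t') m)
  erw [← tsmul_mul, Algebra.TensorProduct.tmul_mul_tmul, one_mul]
lemma tAct_zero (M : ModuleCat.{u} (A ⊗[ℤ] Tᵐᵒᵖ)) : tAct (T := T) M 0 = 0 := by
  ext m
  show tsmul M ((1:A) ⊗ₜ (0:Tᵐᵒᵖ)) m = 0
  rw [TensorProduct.tmul_zero]
  exact tsmul_zero_left M m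
lemma tAct_add (M : ModuleCat.{u} (A ⊗[ℤ] Tᵐᵒᵖ)) (t t' : Tᵐᵒᵖ) :
    tAct (T := T) M (t + t') = tAct M t + tAct M t' := by
  ext m
  show tsmul M ((1:A) ⊗ₜ (t + t')) m = tsmul M ((1:A) ⊗ₜ t) m + tsmul M ((1:A) ⊗ₜ t') m
  rw [TensorProduct.tmul_add]
  exact tsmul_add_left M _ _ m

noncomputable def resMap {M N : ModuleCat.{u} (A ⊗[ℤ] Tᵐᵒᵖ)} (f : M ⟶ N) :
    res (T := T) M ⟶ res N := ModuleCat.ofHom (X := res (T := T) M) (Y := res (T := T) N) {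
  toFun := fun m => f m
  map_add' := fun x y => f.hom.map_add x y
  map_smul' := fun a m => f.hom.map_smul ((a ⊗ₜ (1 : Tᵐᵒᵖ)) : A ⊗[ℤ] Tᵐᵒᵖ) m }
lemma resMap_apply {M N : ModuleCat.{u} (A ⊗[ℤ] Tᵐᵒᵖ)} (f : M ⟶ N) (m : res (T := T) M) :
    resMap (T := T) f m = f m := rfl
lemma resMap_tAct {M N : ModuleCat.{u} (A ⊗[ℤ] Tᵐᵒᵖ)} (f : M ⟶ N) (t : Tᵐᵒᵖ) :
    resMap (T := T) f ≫ tAct N t = tAct M t ≫ resMap f := by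
  ext m
  simp only [ModuleCat.comp_apply, Function.comp_apply, tAct_apply, resMap_apply]
  exact (f.hom.map_smul ((((1:A) ⊗ₜ t) : A ⊗[ℤ] Tᵐᵒᵖ)) m).symm
lemma resMap_id (M : ModuleCat.{u} (A ⊗[ℤ] Tᵐᵒᵖ)) :
    resMap (T := T) (𝟙 M) = 𝟙 (res M) := rfl
lemma resMap_comp {M N P : ModuleCat.{u} (A ⊗[ℤ] Tᵐᵒᵖ)} (f : M ⟶ N) (g : N ⟶ P) :
    resMap (T := T) (f ≫ g) = resMap f ≫ resMap g := rfl
lemma resMap_add {M N : ModuleCat.{u} (A ⊗[ℤ] Tᵐᵒᵖ)} (f g : M ⟶ N) :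
    resMap (T := T) (f + g) = resMap f + resMap g := rfl

/-- Scalar multiplication on a `B`-module as a plain function. -/
def bsmul (X : ModuleCat.{u} B) (b : B) (x : X) : X := b • x

lemma bsmul_one (X : ModuleCat.{u} B) (x : X) : bsmul X 1 x = x := one_smul B x

/-- Making a `(B ⊗[ℤ] Tᵐᵒᵖ)`-linear map from an additive map commuting with pure-tensor
scalars. -/
noncomputable def mkLin {P Q : ModuleCat.{u} (B ⊗[ℤ] Tᵐᵒᵖ)} (f : P →+ Q)
    (hf : ∀ (b : B) (t : Tᵐᵒᵖ) (x : P),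
      f (tsmul P (b ⊗ₜ t) x) = tsmul Q (b ⊗ₜ t) (f x)) : P ⟶ Q := ModuleCat.ofHom {
  toFun := f
  map_add' := f.map_add
  map_smul' := fun z x => by
    show f (tsmul P z x) = tsmul Q z (f x)
    induction z using TensorProduct.induction_on with
    | zero => rw [tsmul_zero_left, tsmul_zero_left, f.map_zero]
    | tmul b t => exact hf b t x
    | add y z hy hz => rw [tsmul_add_left, tsmul_add_left, f.map_add, hy, hz] }

section Equiv
variable (e : ModuleCat.{u} A ≌ ModuleCat.{u} B) [e.functor.Additive]

/-- The `Tᵐᵒᵖ`-action on the image of the restriction under the equivalence. -/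
noncomputable def ρ (M : ModuleCat.{u} (A ⊗[ℤ] Tᵐᵒᵖ)) :
    Tᵐᵒᵖ →+* Module.End B (e.functor.obj (res M)) where
  toFun t := (e.functor.map (tAct M t)).hom
  map_one' := by
    show (e.functor.map (tAct M 1)).hom = LinearMap.id
    rw [tAct_one, e.functor.map_id]; rfl
  map_mul' t t' := by
    show (e.functor.map (tAct M (t * t'))).hom
      = (e.functor.map (tAct M t)).hom.comp (e.functor.map (tAct M t')).hom
    rw [tAct_mul, e.functor.map_comp]; rfl
  map_zero' := by
    show (e.functor.map (tAct M 0)).hom = 0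
    rw [tAct_zero, e.functor.map_zero, ModuleCat.hom_zero]
  map_add' t t' := by
    show (e.functor.map (tAct M (t + t'))).hom
      = (e.functor.map (tAct M t)).hom + (e.functor.map (tAct M t')).hom
    rw [tAct_add, e.functor.map_add, ModuleCat.hom_add]

/-- The transferred `(B ⊗[ℤ] Tᵐᵒᵖ)`-module. -/
noncomputable def fObj (M : ModuleCat.{u} (A ⊗[ℤ] Tᵐᵒᵖ)) : ModuleCat.{u} (B ⊗[ℤ] Tᵐᵒᵖ) :=
  letI : Module Tᵐᵒᵖ (e.functor.obj (res M)) := Module.compHom _ (ρ (T := T) e M)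
  haveI : SMulCommClass B Tᵐᵒᵖ (e.functor.obj (res M)) :=
    ⟨fun b t x => ((ρ (T := T) e M t).map_smul b x).symm⟩
  letI : Module (B ⊗[ℤ] Tᵐᵒᵖ) (e.functor.obj (res M)) := TensorProduct.Algebra.module
  ModuleCat.of (B ⊗[ℤ] Tᵐᵒᵖ) (e.functor.obj (res M))

lemma fObj_smul (M : ModuleCat.{u} (A ⊗[ℤ] Tᵐᵒᵖ)) (b : B) (t : Tᵐᵒᵖ) (x : fObj (T := T) e M) :
    tsmul (fObj e M) (b ⊗ₜ t) x
      = bsmul (e.functor.obj (res M)) b ((e.functor.map (tAct M t)) x) := rfl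


lemma fObj_smul_left (M : ModuleCat.{u} (A ⊗[ℤ] Tᵐᵒᵖ)) (b : B) (x : fObj (T := T) e M) :
    tsmul (fObj e M) (b ⊗ₜ (1:Tᵐᵒᵖ)) x = bsmul (e.functor.obj (res M)) b x := by
  rw [fObj_smul]
  congr 1
  exact DFunLike.congr_fun ((ρ (T := T) e M).map_one) x

lemma fObj_smul_right (M : ModuleCat.{u} (A ⊗[ℤ] Tᵐᵒᵖ)) (t : Tᵐᵒᵖ) (x : fObj (T := T) e M) :
    tsmul (fObj e M) ((1:B) ⊗ₜ t) x
      = (e.functor.map (tAct M t)) (x : e.functor.obj (res M)) := by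
  rw [fObj_smul]
  exact bsmul_one _ _

/-- The transferred morphism. -/
noncomputable def fMap {M N : ModuleCat.{u} (A ⊗[ℤ] Tᵐᵒᵖ)} (f : M ⟶ N) :
    fObj (T := T) e M ⟶ fObj e N :=
  mkLin (e.functor.map (resMap f)).hom.toAddMonoidHom (fun b t x => by
    show (e.functor.map (resMap f)) (tsmul (fObj e M) (b ⊗ₜ t) x)
      = tsmul (fObj e N) (b ⊗ₜ t) ((e.functor.map (resMap f)) x)
    show (e.functor.map (resMap f)) (bsmul _ b ((e.functor.map (tAct M t)) x))
      = bsmul _ b ((e.functor.map (tAct N t)) ((e.functor.map (resMap f)) x))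
    show (e.functor.map (resMap f)) (b • _) = bsmul _ b _
    rw [(e.functor.map (resMap f)).hom.map_smul]
    show bsmul (e.functor.obj (res N)) b _ = bsmul _ b _
    congr 1
    have h := congrArg (fun (g : res M ⟶ res N) => e.functor.map g) (resMap_tAct f t)
    simp only [e.functor.map_comp] at h
    exact ConcreteCategory.congr_hom h.symm (x : e.functor.obj (res M)))

lemma fMap_apply {M N : ModuleCat.{u} (A ⊗[ℤ] Tᵐᵒᵖ)} (f : M ⟶ N) (x : fObj (T := T) e M) :
    fMap e f x = (e.functor.map (resMap f)) (x : e.functor.obj (res M)) := rfl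

/-- The transfer functor. -/
noncomputable def fFunctor : ModuleCat.{u} (A ⊗[ℤ] Tᵐᵒᵖ) ⥤ ModuleCat.{u} (B ⊗[ℤ] Tᵐᵒᵖ) where
  obj := fObj (T := T) e
  map := fMap e
  map_id M := by
    ext x
    erw [fMap_apply, resMap_id, e.functor.map_id]
    rfl
  map_comp f g := by
    ext x
    erw [fMap_apply, resMap_comp, e.functor.map_comp]
    rfl

instance fFunctor_additive : (fFunctor (T := T) e).Additive where
  map_add {M N f g} := by
    ext x
    show fMap e (f + g) x = fMap e f x + fMap e g x
    erw [fMap_apply, fMap_apply, fMap_apply, resMap_add, e.functor.map_add]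
    rfl


instance fFunctor_faithful : (fFunctor (T := T) e).Faithful where
  map_injective {M N f g} h := by
    have h2 : e.functor.map (resMap (T := T) f) = e.functor.map (resMap g) := by
      ext x
      have h3 := ConcreteCategory.congr_hom h x
      exact h3
    have h4 := e.functor.map_injective h2
    ext m
    have h5 := ConcreteCategory.congr_hom h4 m
    erw [resMap_apply, resMap_apply] at h5
    exact h5

/-- Strip the `Tᵐᵒᵖ`-action from a map of transferred modules. -/
noncomputable def stripT {M N : ModuleCat.{u} (A ⊗[ℤ] Tᵐᵒᵖ)}
    (g : fObj (T := T) e M ⟶ fObj e N) :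
    e.functor.obj (res M) ⟶ e.functor.obj (res N) := ModuleCat.ofHom {
  toFun := fun x => g x
  map_add' := fun x y => g.hom.map_add x y
  map_smul' := fun b x => by
    show g (bsmul (e.functor.obj (res M)) b x) = bsmul (e.functor.obj (res N)) b (g x)
    erw [← fObj_smul_left, ← fObj_smul_left]
    exact g.hom.map_smul ((b ⊗ₜ (1:Tᵐᵒᵖ)) : B ⊗[ℤ] Tᵐᵒᵖ) x }

lemma stripT_equivariant {M N : ModuleCat.{u} (A ⊗[ℤ] Tᵐᵒᵖ)}
    (g : fObj (T := T) e M ⟶ fObj e N) (t : Tᵐᵒᵖ) :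
    e.functor.map (tAct M t) ≫ stripT e g = stripT e g ≫ e.functor.map (tAct N t) := by
  ext x
  simp only [ModuleCat.comp_apply, Function.comp_apply]
  show g (e.functor.map (tAct M t) x) = e.functor.map (tAct N t) (g x)
  erw [← fObj_smul_right, ← fObj_smul_right]
  exact g.hom.map_smul (((1:B) ⊗ₜ t) : B ⊗[ℤ] Tᵐᵒᵖ) x

instance fFunctor_full : (fFunctor (T := T) e).Full where
  map_surjective {M N} g := by
    set f0 : res (T := T) M ⟶ res N := e.functor.preimage (stripT e g) with hf0
    have hcomm : ∀ t : Tᵐᵒᵖ, f0 ≫ tAct N t = tAct M t ≫ f0 := by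
      intro t
      apply e.functor.map_injective
      rw [e.functor.map_comp, e.functor.map_comp, Functor.map_preimage]
      exact (stripT_equivariant e g t).symm
    have hf : ∀ (a : A) (t : Tᵐᵒᵖ) (x : M),
        f0.hom.toAddMonoidHom (tsmul M (a ⊗ₜ t) x) = tsmul N (a ⊗ₜ t) (f0.hom.toAddMonoidHom x) := by
      intro a t x
      have key : ((a ⊗ₜ t) : A ⊗[ℤ] Tᵐᵒᵖ) = (a ⊗ₜ (1:Tᵐᵒᵖ)) * ((1:A) ⊗ₜ t) := by
        rw [Algebra.TensorProduct.tmul_mul_tmul, mul_one, one_mul]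
      have e2 : ∀ y : res (T := T) M, f0 (tsmul M ((1:A) ⊗ₜ t) y)
          = tsmul N ((1:A) ⊗ₜ t) (f0 y) := by
        intro y
        have h6 := ConcreteCategory.congr_hom (hcomm t) y
        simp only [ModuleCat.comp_apply, Function.comp_apply] at h6
        rw [tAct_apply, tAct_apply] at h6
        exact h6.symm
      have e1 : ∀ y : res (T := T) M, f0 (tsmul M (a ⊗ₜ (1:Tᵐᵒᵖ)) y)
          = tsmul N (a ⊗ₜ (1:Tᵐᵒᵖ)) (f0 y) := by
        intro y
        rw [← res_smul, ← res_smul]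
        exact f0.hom.map_smul a y
      show f0 (tsmul M (a ⊗ₜ t) x) = tsmul N (a ⊗ₜ t) (f0 x)
      erw [key, tsmul_mul, tsmul_mul, e1, e2]
    refine ⟨mkLin f0.hom.toAddMonoidHom hf, ?_⟩
    ext x
    show e.functor.map (resMap (mkLin f0.hom.toAddMonoidHom hf)) x = g x
    have hres : resMap (T := T) (mkLin f0.hom.toAddMonoidHom hf) = f0 := by
      ext m; rfl
    rw [hres, hf0, Functor.map_preimage]
    rfl


section EssSurj
variable (N : ModuleCat.{u} (B ⊗[ℤ] Tᵐᵒᵖ))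

/-- The identity map, as a linear map from the restriction of the transferred module
to the image of the restriction. -/
noncomputable def resHom :
    haveI : e.symm.functor.Additive := (inferInstance : e.inverse.Additive)
    res (T := T) (fObj e.symm N) ⟶ e.symm.functor.obj (res N) := by
  haveI : e.symm.functor.Additive := (inferInstance : e.inverse.Additive)
  refine ModuleCat.ofHom (X := res (T := T) (fObj e.symm N)) (Y := e.symm.functor.obj (res N)) ?_
  exact
  { toFun := fun x => x
    map_add' := fun x y => rfl
    map_smul' := fun a x => by
      show tsmul (fObj e.symm N) (a ⊗ₜ (1:Tᵐᵒᵖ)) x = _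
      erw [fObj_smul_left]
      rfl }

/-- The identity map, as a linear map from the image of the restriction to the restriction
of the transferred module. -/
noncomputable def resInv :
    haveI : e.symm.functor.Additive := (inferInstance : e.inverse.Additive)
    (e.symm.functor.obj (res N) : ModuleCat.{u} A) ⟶ res (T := T) (fObj e.symm N) := by
  haveI : e.symm.functor.Additive := (inferInstance : e.inverse.Additive)
  refine ModuleCat.ofHom (X := e.symm.functor.obj (res N)) (Y := res (T := T) (fObj e.symm N)) ?_
  exact
  { toFun := fun x => x
    map_add' := fun x y => rfl
    map_smul' := fun a x => by
      show _ = tsmul (fObj e.symm N) (a ⊗ₜ (1:Tᵐᵒᵖ)) x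
      erw [fObj_smul_left]
      rfl }

/-- The identity map, seen as an isomorphism between the restriction of the transferred module
and the image of the restriction. -/
noncomputable def resIso :
    haveI : e.symm.functor.Additive := (inferInstance : e.inverse.Additive)
    res (T := T) (fObj e.symm N) ≅ e.symm.functor.obj (res N) := by
  haveI : e.symm.functor.Additive := (inferInstance : e.inverse.Additive)
  exact
  { hom := resHom e N
    inv := resInv e N
    hom_inv_id := by ext x; rfl
    inv_hom_id := by ext x; rfl }


/-- The comparison isomorphism in `ModuleCat B`. -/
noncomputable def cIso :
    haveI : e.symm.functor.Additive := (inferInstance : e.inverse.Additive)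
    e.functor.obj (res (T := T) (fObj e.symm N)) ≅ res N :=
  haveI : e.symm.functor.Additive := (inferInstance : e.inverse.Additive)
  e.functor.mapIso (resIso e N) ≪≫ e.counitIso.app (res N)

lemma cIso_commutes (t : Tᵐᵒᵖ) :
    haveI : e.symm.functor.Additive := (inferInstance : e.inverse.Additive)
    e.functor.map (tAct (fObj e.symm N) t) ≫ (cIso (T := T) e N).hom
      = (cIso e N).hom ≫ tAct N t := by
  haveI : e.symm.functor.Additive := (inferInstance : e.inverse.Additive)
  have stepA : tAct (fObj e.symm N) t ≫ resHom e N
      = resHom e N ≫ e.symm.functor.map (tAct N t) := by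
    ext m
    simp only [ModuleCat.comp_apply, Function.comp_apply]
    show resHom e N (tsmul (fObj e.symm N) ((1:A) ⊗ₜ t) m) = _
    erw [fObj_smul_right]
    rfl
  have : (cIso (T := T) e N).hom = e.functor.map (resHom e N) ≫ e.counit.app (res N) := rfl
  rw [this, ← Category.assoc, ← e.functor.map_comp, stepA, e.functor.map_comp, Category.assoc,
    Category.assoc]
  congr 1
  exact e.counit.naturality (tAct N t)

/-- The isomorphism exhibiting essential surjectivity. -/
noncomputable def essIso :
    haveI : e.symm.functor.Additive := (inferInstance : e.inverse.Additive)
    fObj (T := T) e (fObj e.symm N) ≅ N := by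
  haveI : e.symm.functor.Additive := (inferInstance : e.inverse.Additive)
  have key : ∀ (t : Tᵐᵒᵖ) (x : e.functor.obj (res (T := T) (fObj e.symm N))),
      (cIso e N).hom (e.functor.map (tAct (fObj e.symm N) t) x)
        = tAct N t ((cIso e N).hom x) := by
    intro t x
    have h := ConcreteCategory.congr_hom (cIso_commutes e N t) x
    simpa only [ModuleCat.comp_apply, Function.comp_apply] using h
  have tsmulN : ∀ (b : B) (t : Tᵐᵒᵖ) (y : N),
      tsmul N (b ⊗ₜ t) y = bsmul (res N) b (tAct N t y) := by
    intro b t y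
    have key2 : ((b ⊗ₜ t) : B ⊗[ℤ] Tᵐᵒᵖ) = (b ⊗ₜ (1:Tᵐᵒᵖ)) * ((1:B) ⊗ₜ t) := by
      rw [Algebra.TensorProduct.tmul_mul_tmul, mul_one, one_mul]
    erw [key2, tsmul_mul, ← tAct_apply, ← res_smul]
    rfl
  refine ⟨mkLin (cIso e N).hom.hom.toAddMonoidHom (fun b t x => ?_),
    mkLin (cIso e N).inv.hom.toAddMonoidHom (fun b t x => ?_), ?_, ?_⟩
  · -- hom is equivariant
    show (cIso e N).hom (tsmul (fObj e (fObj e.symm N)) (b ⊗ₜ t) x) = tsmul N (b ⊗ₜ t) _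
    rw [fObj_smul, tsmulN]
    show (cIso e N).hom (b • _) = _
    rw [(cIso e N).hom.hom.map_smul]
    show bsmul (res N) b _ = bsmul (res N) b _
    erw [key]
    rfl
  · -- inv is equivariant
    have hhi : ∀ z, (cIso e N).hom ((cIso e N).inv z) = z := fun z => by
      have h := ConcreteCategory.congr_hom (cIso e N).inv_hom_id z
      simpa only [ModuleCat.comp_apply, Function.comp_apply, ModuleCat.id_apply] using h
    have hih : ∀ z, (cIso e N).inv ((cIso e N).hom z) = z := fun z => by
      have h := ConcreteCategory.congr_hom (cIso e N).hom_inv_id z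
      simpa only [ModuleCat.comp_apply, Function.comp_apply, ModuleCat.id_apply] using h
    show (cIso e N).inv (tsmul N (b ⊗ₜ t) x)
      = tsmul (fObj e (fObj e.symm N)) (b ⊗ₜ t) ((cIso e N).inv x)
    erw [tsmulN, fObj_smul]
    show (cIso e N).inv (b • _) = _
    rw [(cIso e N).inv.hom.map_smul]
    show bsmul (e.functor.obj (res (fObj e.symm N))) b _
      = bsmul (e.functor.obj (res (fObj e.symm N))) b _
    have hx : tAct N t x = (cIso e N).hom (e.functor.map (tAct (fObj e.symm N) t)
        ((cIso e N).inv x)) := by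
      erw [key, hhi]
    rw [hx, hih]
  · -- hom_inv_id
    ext x
    show (cIso e N).inv ((cIso e N).hom x) = x
    have h := ConcreteCategory.congr_hom (cIso e N).hom_inv_id x
    exact h
  · -- inv_hom_id
    ext x
    show (cIso e N).hom ((cIso e N).inv x) = x
    have h := ConcreteCategory.congr_hom (cIso e N).inv_hom_id x
    exact h


end EssSurj

instance fFunctor_essSurj : (fFunctor (T := T) e).EssSurj where
  mem_essImage N := by
    haveI : e.symm.functor.Additive := (inferInstance : e.inverse.Additive)
    exact ⟨fObj (T := T) e.symm N, ⟨essIso e N⟩⟩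

instance fFunctor_isEquivalence : (fFunctor (T := T) e).IsEquivalence where

end Equiv
end ModuleEquivFibered


open ModuleEquivFibered

/-- Let `R` and `S` be rings admitting an additive equivalence between
their categories of left modules. Then for every ring `T` there is an additive equivalence
between the category of `(R,T)`-bimodules and the category of `(S,T)`-bimodules;
equivalently (an `(R,T)`-bimodule being the same thing as a left module over the ring
`R ⊗[ℤ] Tᵒᵖ`), the categories of left modules over `R ⊗[ℤ] Tᵒᵖ` and over `S ⊗[ℤ] Tᵒᵖ`
are additively equivalent. -/
theorem module_equivalence_fibered
    (R S : Type u) [Ring R] [Ring S]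
    (h : ∃ e : ModuleCat.{u} R ≌ ModuleCat.{u} S, e.functor.Additive) :
    ∀ (T : Type u) [Ring T],
      ∃ e : ModuleCat.{u} (R ⊗[ℤ] Tᵐᵒᵖ) ≌ ModuleCat.{u} (S ⊗[ℤ] Tᵐᵒᵖ),
        e.functor.Additive := by
  obtain ⟨e, he⟩ := h
  intro T _
  haveI := he
  exact ⟨(fFunctor (T := T) e).asEquivalence, fFunctor_additive e⟩
end
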